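/- Let g(t,z) = e^(−z²/(4t))/√(4πt) be the Gaussian kernel. For x, y > 0 and t > 0, ∫₀ᵗ (x/(t−τ)) g(t−τ, x) g(τ, y) dτ = g(t, x+y). -/

import Mathlib

open MeasureTheory Set Filter Topology

/-- The Gaussian heat kernel `g(t,z) = e^(-z²/(4t))/√(4πt)`. -/
noncomputable def heatKernel (t z : ℝ) : ℝ :=
  Real.exp (-z ^ 2 / (4 * t)) / Real.sqrt (4 * Real.pi * t)

namespace HKAux

/-- The substitution variable `u(τ) = ((x+y)τ - yt)/√(τ(t-τ))`. -/
noncomputable def U (x y t τ : ℝ) : ℝ := ((x + y) * τ - y * t) / Real.sqrt (τ * (t - τ))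

/-- Its derivative. -/
noncomputable def U' (x y t τ : ℝ) : ℝ :=
  t * (x * τ + y * (t - τ)) / (2 * (τ * (t - τ)) * Real.sqrt (τ * (t - τ)))

/-- The transformed integrand. -/
noncomputable def G (x y t u : ℝ) : ℝ :=
  Real.exp (-(x + y) ^ 2 / (4 * t)) / (4 * Real.pi) *
    ((1 + u / Real.sqrt (u ^ 2 + 4 * (x * y))) * Real.exp (-u ^ 2 / (4 * t)) / t)

theorem hasDerivAt_U (x y t : ℝ) {τ : ℝ} (hτ : τ ∈ Ioo (0:ℝ) t) :
    HasDerivAt (U x y t) (U' x y t τ) τ := by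
  obtain ⟨h1, h2⟩ := hτ
  have hp : 0 < τ * (t - τ) := mul_pos h1 (sub_pos.2 h2)
  set s := Real.sqrt (τ * (t - τ)) with hs
  have hspos : 0 < s := Real.sqrt_pos.2 hp
  have hs2 : s ^ 2 = τ * (t - τ) := Real.sq_sqrt hp.le
  have hmul : HasDerivAt (fun τ : ℝ => τ * (t - τ)) (t - 2 * τ) τ := by
    have := (hasDerivAt_id τ).mul ((hasDerivAt_const τ t).sub (hasDerivAt_id τ))
    convert this using 1
    · rfl
    · rfl
    · rfl
    simp [id]
    ring
  have hsqrt : HasDerivAt (fun τ : ℝ => Real.sqrt (τ * (t - τ)))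
      (1 / (2 * s) * (t - 2 * τ)) τ := by
    have := (Real.hasDerivAt_sqrt hp.ne').comp τ hmul
    simpa [hs, Function.comp_def] using this
  have hN : HasDerivAt (fun τ : ℝ => (x + y) * τ - y * t) (x + y) τ := by
    simpa using ((hasDerivAt_id τ).const_mul (x + y)).sub_const (y * t)
  have hdiv := hN.div hsqrt hspos.ne'
  convert hdiv using 1
  · rfl
  · rfl
  · rfl
  rw [U', ← hs, ← hs2]
  field_simp
  linear_combination (-2*(x+y)) * hs2

theorem U'_pos {x y t : ℝ} (hx : 0 < x) (hy : 0 < y) (ht : 0 < t) {τ : ℝ}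
    (hτ : τ ∈ Ioo (0:ℝ) t) : 0 < U' x y t τ := by
  obtain ⟨h1, h2⟩ := hτ
  have h3 : 0 < t - τ := sub_pos.2 h2
  have hp : 0 < τ * (t - τ) := mul_pos h1 h3
  exact div_pos (mul_pos ht (by nlinarith))
    (mul_pos (by linarith) (Real.sqrt_pos.2 hp))

theorem pointwise_eq {x y t : ℝ} (hx : 0 < x) (hy : 0 < y) (ht : 0 < t) {τ : ℝ}
    (hτ : τ ∈ Ioo (0:ℝ) t) :
    (x / (t - τ)) * heatKernel (t - τ) x * heatKernel τ y
      = |U' x y t τ| • G x y t (U x y t τ) := by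
  obtain ⟨h1, h2⟩ := hτ
  have h3 : 0 < t - τ := sub_pos.2 h2
  have hp : 0 < τ * (t - τ) := mul_pos h1 h3
  have hπ : 0 < Real.pi := Real.pi_pos
  set s := Real.sqrt (τ * (t - τ)) with hsdef
  have hspos : 0 < s := Real.sqrt_pos.2 hp
  have hs2 : s ^ 2 = τ * (t - τ) := Real.sq_sqrt hp.le
  have hM : 0 < x * τ + y * (t - τ) := by nlinarith
  rw [abs_of_pos (U'_pos hx hy ht ⟨h1, h2⟩)]
  have hU2 : (U x y t τ) ^ 2 + 4 * (x * y) = ((x * τ + y * (t - τ)) / s) ^ 2 := by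
    rw [U, ← hsdef, div_pow, div_pow, hs2]
    field_simp
    ring
  have hsq : Real.sqrt ((U x y t τ) ^ 2 + 4 * (x * y)) = (x * τ + y * (t - τ)) / s := by
    rw [hU2, Real.sqrt_sq (le_of_lt (div_pos hM hspos))]
  have hexp : Real.exp (-x ^ 2 / (4 * (t - τ))) * Real.exp (-y ^ 2 / (4 * τ))
      = Real.exp (-(x + y) ^ 2 / (4 * t)) * Real.exp (-(U x y t τ) ^ 2 / (4 * t)) := by
    rw [← Real.exp_add, ← Real.exp_add]
    congr 1
    rw [U, ← hsdef, div_pow, hs2]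
    field_simp
    ring
  have hs4π : Real.sqrt (4 * Real.pi * (t - τ)) * Real.sqrt (4 * Real.pi * τ)
      = 4 * Real.pi * s := by
    rw [← Real.sqrt_mul (by positivity), hsdef,
      show 4 * Real.pi * (t - τ) * (4 * Real.pi * τ) = (4 * Real.pi) ^ 2 * (τ * (t - τ)) by ring,
      Real.sqrt_mul (by positivity), Real.sqrt_sq (by positivity)]
  have hfac : 1 + U x y t τ / Real.sqrt ((U x y t τ) ^ 2 + 4 * (x * y))
      = 2 * (x * τ) / (x * τ + y * (t - τ)) := by
    rw [hsq, U, ← hsdef, div_div_div_eq, mul_comm s (x * τ + y * (t - τ)),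
      mul_div_mul_right _ _ hspos.ne']
    field_simp
    ring
  have expand : x / (t - τ) * (Real.exp (-x ^ 2 / (4 * (t - τ))) / Real.sqrt (4 * Real.pi * (t - τ))) *
      (Real.exp (-y ^ 2 / (4 * τ)) / Real.sqrt (4 * Real.pi * τ))
      = x * (Real.exp (-x ^ 2 / (4 * (t - τ))) * Real.exp (-y ^ 2 / (4 * τ))) /
        ((t - τ) * (Real.sqrt (4 * Real.pi * (t - τ)) * Real.sqrt (4 * Real.pi * τ))) := by
    have hA : Real.sqrt (4 * Real.pi * (t - τ)) ≠ 0 := by positivity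
    have hB : Real.sqrt (4 * Real.pi * τ) ≠ 0 := by positivity
    field_simp
  rw [heatKernel, heatKernel, G, hfac, smul_eq_mul, U', ← hsdef, expand, hs4π, hexp]
  field_simp

theorem contOn {x y t : ℝ} (ht : 0 < t) : ContinuousOn (U x y t) (Ioo 0 t) := by
  apply ContinuousOn.div (by fun_prop) (by fun_prop)
  intro τ hτ
  have : 0 < τ * (t - τ) := mul_pos hτ.1 (sub_pos.2 hτ.2)
  positivity

theorem strictMono_U {x y t : ℝ} (hx : 0 < x) (hy : 0 < y) (ht : 0 < t) :
    StrictMonoOn (U x y t) (Ioo 0 t) := by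
  apply strictMonoOn_of_deriv_pos (convex_Ioo 0 t) (contOn ht)
  intro τ hτ
  rw [interior_Ioo] at hτ
  rw [(hasDerivAt_U x y t hτ).deriv]
  exact U'_pos hx hy ht hτ

theorem tendsto_bot {x y t : ℝ} (hx : 0 < x) (hy : 0 < y) (ht : 0 < t) :
    Tendsto (U x y t) (𝓝[Ioo (0:ℝ) t] 0) atBot := by
  have hnum : Tendsto (fun τ : ℝ => (x + y) * τ - y * t) (𝓝[Ioo (0:ℝ) t] 0)
      (𝓝 (-(y * t))) := by
    have : Tendsto (fun τ : ℝ => (x + y) * τ - y * t) (𝓝 0) (𝓝 ((x + y) * 0 - y * t)) :=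
      Continuous.tendsto (by continuity) 0
    simpa using this.mono_left nhdsWithin_le_nhds
  have hden : Tendsto (fun τ : ℝ => Real.sqrt (τ * (t - τ))) (𝓝[Ioo (0:ℝ) t] 0)
      (𝓝[>] 0) := by
    rw [tendsto_nhdsWithin_iff]
    constructor
    · have : Tendsto (fun τ : ℝ => Real.sqrt (τ * (t - τ))) (𝓝 0)
          (𝓝 (Real.sqrt (0 * (t - 0)))) := Continuous.tendsto (by continuity) _
      simpa using this.mono_left nhdsWithin_le_nhds
    · filter_upwards [self_mem_nhdsWithin] with τ hτ
      exact Real.sqrt_pos.2 (mul_pos hτ.1 (sub_pos.2 hτ.2))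
  have hinv : Tendsto (fun τ : ℝ => (Real.sqrt (τ * (t - τ)))⁻¹) (𝓝[Ioo (0:ℝ) t] 0)
      atTop := tendsto_inv_nhdsGT_zero.comp hden
  have := hnum.neg_mul_atTop (by nlinarith : -(y * t) < 0) hinv
  unfold U
  simpa [U, div_eq_mul_inv] using this

theorem tendsto_top {x y t : ℝ} (hx : 0 < x) (hy : 0 < y) (ht : 0 < t) :
    Tendsto (U x y t) (𝓝[Ioo (0:ℝ) t] t) atTop := by
  have hnum : Tendsto (fun τ : ℝ => (x + y) * τ - y * t) (𝓝[Ioo (0:ℝ) t] t)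
      (𝓝 (x * t)) := by
    have : Tendsto (fun τ : ℝ => (x + y) * τ - y * t) (𝓝 t) (𝓝 ((x + y) * t - y * t)) :=
      Continuous.tendsto (by continuity) t
    have h2 : (x + y) * t - y * t = x * t := by ring
    rw [h2] at this
    exact this.mono_left nhdsWithin_le_nhds
  have hden : Tendsto (fun τ : ℝ => Real.sqrt (τ * (t - τ))) (𝓝[Ioo (0:ℝ) t] t)
      (𝓝[>] 0) := by
    rw [tendsto_nhdsWithin_iff]
    constructor
    · have : Tendsto (fun τ : ℝ => Real.sqrt (τ * (t - τ))) (𝓝 t)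
          (𝓝 (Real.sqrt (t * (t - t)))) := Continuous.tendsto (by continuity) _
      simpa using this.mono_left nhdsWithin_le_nhds
    · filter_upwards [self_mem_nhdsWithin] with τ hτ
      exact Real.sqrt_pos.2 (mul_pos hτ.1 (sub_pos.2 hτ.2))
  have hinv : Tendsto (fun τ : ℝ => (Real.sqrt (τ * (t - τ)))⁻¹) (𝓝[Ioo (0:ℝ) t] t)
      atTop := tendsto_inv_nhdsGT_zero.comp hden
  have := hnum.pos_mul_atTop (by positivity : (0:ℝ) < x * t) hinv
  unfold U
  simpa [U, div_eq_mul_inv] using this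

theorem image_U {x y t : ℝ} (hx : 0 < x) (hy : 0 < y) (ht : 0 < t) :
    U x y t '' Ioo 0 t = univ := by
  apply eq_univ_of_forall
  intro c
  have hne0 : (𝓝[Ioo (0:ℝ) t] 0).NeBot := by
    rw [← mem_closure_iff_nhdsWithin_neBot, closure_Ioo ht.ne]
    exact ⟨le_refl 0, ht.le⟩
  have hnet : (𝓝[Ioo (0:ℝ) t] t).NeBot := by
    rw [← mem_closure_iff_nhdsWithin_neBot, closure_Ioo ht.ne]
    exact ⟨ht.le, le_refl t⟩
  obtain ⟨a, hac, ha⟩ :=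
    (((tendsto_bot hx hy ht).eventually (eventually_lt_atBot c)).and
      eventually_mem_nhdsWithin).exists
  obtain ⟨b, hbc, hb⟩ :=
    (((tendsto_top hx hy ht).eventually (eventually_gt_atTop c)).and
      eventually_mem_nhdsWithin).exists
  have hab : a < b := by
    by_contra h
    push_neg at h
    have := (strictMono_U hx hy ht).monotoneOn hb ha h
    linarith
  have hIccsub : Icc a b ⊆ Ioo 0 t := fun w hw => ⟨lt_of_lt_of_le ha.1 hw.1,
    lt_of_le_of_lt hw.2 hb.2⟩
  have hcont2 : ContinuousOn (U x y t) (Icc a b) := (contOn ht).mono hIccsub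
  obtain ⟨z, hz, hzc⟩ := intermediate_value_Ioo hab.le hcont2 ⟨hac, hbc⟩
  exact ⟨z, ⟨lt_trans ha.1 hz.1, lt_trans hz.2 hb.2⟩, hzc⟩

theorem integral_G {x y t : ℝ} (hx : 0 < x) (hy : 0 < y) (ht : 0 < t) :
    ∫ u : ℝ, G x y t u = heatKernel t (x + y) := by
  have hxy : 0 < 4 * (x * y) := by positivity
  have hπ := Real.pi_pos
  have hb : (0:ℝ) < 1 / (4 * t) := by positivity
  have hrw : ∀ u : ℝ, Real.exp (-u ^ 2 / (4 * t)) = Real.exp (-(1 / (4 * t)) * u ^ 2) := by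
    intro u; congr 1; ring
  have hgauss_int : Integrable (fun u : ℝ => Real.exp (-u ^ 2 / (4 * t))) := by
    simp only [hrw]
    exact integrable_exp_neg_mul_sq hb
  have hgauss : ∫ u : ℝ, Real.exp (-u ^ 2 / (4 * t)) = Real.sqrt (4 * Real.pi * t) := by
    simp only [hrw]
    rw [integral_gaussian]
    congr 1
    field_simp
  set f : ℝ → ℝ := fun u => u / Real.sqrt (u ^ 2 + 4 * (x * y)) * Real.exp (-u ^ 2 / (4 * t))
    with hf
  have hcont : Continuous f := by
    apply Continuous.mul
    · apply Continuous.div continuous_id (by continuity)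
      intro u
      have : 0 < u ^ 2 + 4 * (x * y) := by positivity
      positivity
    · continuity
  have hfbound : ∀ u : ℝ, ‖f u‖ ≤ Real.exp (-u ^ 2 / (4 * t)) := by
    intro u
    rw [hf]
    simp only [norm_mul, Real.norm_eq_abs, Real.abs_exp]
    have h1 : |u / Real.sqrt (u ^ 2 + 4 * (x * y))| ≤ 1 := by
      rw [abs_div, abs_of_nonneg (Real.sqrt_nonneg _)]
      apply div_le_one_of_le₀
      · rw [← Real.sqrt_sq_eq_abs]
        exact Real.sqrt_le_sqrt (by nlinarith)
      · exact Real.sqrt_nonneg _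
    calc |u / Real.sqrt (u ^ 2 + 4 * (x * y))| * Real.exp (-u ^ 2 / (4 * t))
        ≤ 1 * Real.exp (-u ^ 2 / (4 * t)) :=
          mul_le_mul_of_nonneg_right h1 (Real.exp_nonneg _)
      _ = Real.exp (-u ^ 2 / (4 * t)) := one_mul _
  have hfint : Integrable f :=
    hgauss_int.mono' hcont.aestronglyMeasurable (Eventually.of_forall hfbound)
  have hfodd : ∫ u : ℝ, f u = 0 := by
    have h1 : ∀ u : ℝ, f (-u) = -f u := by
      intro u
      rw [hf]
      simp only [neg_sq, neg_div, neg_mul]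
    have h2 : (∫ u : ℝ, f u) = ∫ u : ℝ, f (-u) := (integral_neg_eq_self f volume).symm
    have h3 : (∫ u : ℝ, f (-u)) = -∫ u : ℝ, f u := by
      simp only [h1]
      exact integral_neg f
    linarith
  have hsplit : ∀ u : ℝ, G x y t u = Real.exp (-(x + y) ^ 2 / (4 * t)) / (4 * Real.pi * t) *
      (Real.exp (-u ^ 2 / (4 * t)) + f u) := by
    intro u
    rw [G, hf]
    field_simp
  simp only [hsplit]
  rw [integral_const_mul, integral_add hgauss_int hfint, hfodd, add_zero, hgauss, heatKernel]
  set s := Real.sqrt (4 * Real.pi * t) with hsdef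
  have hspos : 0 < s := Real.sqrt_pos.2 (by positivity)
  have hs2 : s ^ 2 = 4 * Real.pi * t := Real.sq_sqrt (by positivity)
  rw [← hs2]
  field_simp

end HKAux

/-- Convolution identity: for `x, y, t > 0`,
`∫₀ᵗ (x/(t-τ)) g(t-τ,x) g(τ,y) dτ = g(t,x+y)`. -/
theorem heatKernel_hitting_convolution (x y t : ℝ) (hx : 0 < x) (hy : 0 < y)
    (ht : 0 < t) :
    ∫ τ in Ioo (0:ℝ) t, (x / (t - τ)) * heatKernel (t - τ) x * heatKernel τ y
      = heatKernel t (x + y) := by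
  have h1 : EqOn (fun τ => (x / (t - τ)) * heatKernel (t - τ) x * heatKernel τ y)
      (fun τ => |HKAux.U' x y t τ| • HKAux.G x y t (HKAux.U x y t τ)) (Ioo 0 t) :=
    fun τ hτ => HKAux.pointwise_eq hx hy ht hτ
  rw [setIntegral_congr_fun measurableSet_Ioo h1,
    ← integral_image_eq_integral_abs_deriv_smul measurableSet_Ioo
      (fun τ hτ => (HKAux.hasDerivAt_U x y t hτ).hasDerivWithinAt)
      (HKAux.strictMono_U hx hy ht).injOn (HKAux.G x y t),
    HKAux.image_U hx hy ht, setIntegral_univ]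
  exact HKAux.integral_G hx hy ht
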